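/- For θ ∈ (0, π/4) and -cos(θ+π/4)/√2 ≤ r < cos(θ+π/4)/√2, one has A_∞(r,θ) = tan(θ)/2 - (r - cos(π/4+θ)/√2)/cos(θ). -/
import Mathlib


open Real MeasureTheory Pointwise

/-- The unit square tilted by angle `θ` and centered at `(r, 0)`. -/
noncomputable def tiltedSquare (r θ : ℝ) : Set (ℝ × ℝ) :=
  {p | ∃ x y : ℝ, |x| ≤ 1/2 ∧ |y| ≤ 1/2 ∧
    p = (r + x * Real.cos θ - y * Real.sin θ, x * Real.sin θ + y * Real.cos θ)}

/-- The area of the portion of the tilted shifted unit square lying in the left half-plane. -/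
noncomputable def Ainf (r θ : ℝ) : ℝ :=
  (volume (tiltedSquare r θ ∩ {p : ℝ × ℝ | p.1 ≤ 0})).toReal

/-- Rotation by angle `θ` as a linear map on `ℝ × ℝ`. -/
noncomputable def rotMap (θ : ℝ) : (ℝ × ℝ) →ₗ[ℝ] (ℝ × ℝ) where
  toFun p := (p.1 * Real.cos θ - p.2 * Real.sin θ, p.1 * Real.sin θ + p.2 * Real.cos θ)
  map_add' p q := by simp [Prod.ext_iff]; constructor <;> ring
  map_smul' c p := by simp [Prod.ext_iff]; constructor <;> ring

lemma rotMap_apply (θ : ℝ) (p : ℝ × ℝ) :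
    rotMap θ p = (p.1 * Real.cos θ - p.2 * Real.sin θ, p.1 * Real.sin θ + p.2 * Real.cos θ) :=
  rfl

lemma rotMap_det (θ : ℝ) : LinearMap.det (rotMap θ) = 1 := by
  rw [← LinearMap.det_toMatrix (Module.Basis.finTwoProd ℝ), Matrix.det_fin_two]
  simp [LinearMap.toMatrix_apply, rotMap]
  nlinarith [Real.sin_sq_add_cos_sq θ]

lemma volume_image_rot (θ r : ℝ) (A : Set (ℝ × ℝ)) :
    volume ((fun p => ((r, 0) : ℝ × ℝ) + rotMap θ p) '' A) = volume A := by
  have h1 : (fun p => ((r, 0) : ℝ × ℝ) + rotMap θ p) '' A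
      = ((r, 0) : ℝ × ℝ) +ᵥ (rotMap θ '' A) := by
    rw [← Set.image_vadd, Set.image_image]
    rfl
  rw [h1, measure_vadd, Measure.addHaar_image_linearMap, rotMap_det]
  simp

lemma tilted_eq (r θ : ℝ) :
    tiltedSquare r θ = (fun p => ((r, 0) : ℝ × ℝ) + rotMap θ p) ''
      {p : ℝ × ℝ | |p.1| ≤ 1/2 ∧ |p.2| ≤ 1/2} := by
  ext p
  constructor
  · rintro ⟨x, y, hx, hy, rfl⟩
    exact ⟨(x, y), ⟨hx, hy⟩, by simp [rotMap_apply, Prod.ext_iff]; ring⟩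
  · rintro ⟨⟨x, y⟩, ⟨hx, hy⟩, rfl⟩
    exact ⟨x, y, hx, hy, by simp [rotMap_apply, Prod.ext_iff]; ring⟩

theorem Ainf_formula_middle_range (θ : ℝ) (hθ : θ ∈ Set.Ioo (0:ℝ) (π/4)) (r : ℝ)
    (hr1 : -(Real.cos (θ + π/4) / Real.sqrt 2) ≤ r)
    (hr2 : r < Real.cos (θ + π/4) / Real.sqrt 2) :
    Ainf r θ = Real.tan θ / 2 - (r - Real.cos (π/4 + θ) / Real.sqrt 2) / Real.cos θ := by
  obtain ⟨hθ0, hθ4⟩ := hθ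
  set c := Real.cos θ with hc
  set s := Real.sin θ with hs
  have hs0 : 0 < s := Real.sin_pos_of_pos_of_lt_pi hθ0 (by linarith [Real.pi_gt_three])
  have hc0 : 0 < c := Real.cos_pos_of_mem_Ioo
    ⟨by linarith [Real.pi_gt_three], by linarith [Real.pi_gt_three]⟩
  have hsc : s < c := by
    have := Real.sin_lt_sin_of_lt_of_le_pi_div_two (x := θ) (y := π/2 - θ)
      (by linarith [Real.pi_gt_three]) (by linarith) (by linarith)
    rwa [Real.sin_pi_div_two_sub] at this
  -- rewrite the range hypotheses
  have hkey : Real.cos (θ + π/4) / Real.sqrt 2 = (c - s) / 2 := by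
    have h2 : Real.sqrt 2 ≠ 0 := by positivity
    rw [Real.cos_add, Real.cos_pi_div_four, Real.sin_pi_div_four]
    field_simp
    nlinarith [Real.sq_sqrt (by norm_num : (2:ℝ) ≥ 0)]
  rw [hkey] at hr1 hr2
  -- the preimage region
  set K : Set (ℝ × ℝ) :=
    {p : ℝ × ℝ | |p.1| ≤ 1/2 ∧ |p.2| ≤ 1/2 ∧ r + p.1 * c - p.2 * s ≤ 0} with hK
  have hKmeas : MeasurableSet K := by
    have hKin : K = {p : ℝ × ℝ | |p.1| ≤ 1/2} ∩ ({p : ℝ × ℝ | |p.2| ≤ 1/2} ∩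
        {p : ℝ × ℝ | r + p.1 * c - p.2 * s ≤ 0}) := by
      ext p; simp [hK, Set.mem_setOf_eq, and_assoc]
    rw [hKin]
    exact (measurableSet_le (measurable_fst.abs) measurable_const).inter
      ((measurableSet_le (measurable_snd.abs) measurable_const).inter
        (measurableSet_le (by fun_prop) measurable_const))
  -- reduce Ainf to volume K
  have hvol : volume (tiltedSquare r θ ∩ {p : ℝ × ℝ | p.1 ≤ 0}) = volume K := by
    rw [tilted_eq, ← Set.image_inter_preimage, volume_image_rot]
    congr 1
    ext ⟨x, y⟩
    simp only [hK, Set.mem_inter_iff, Set.mem_setOf_eq, Set.mem_preimage, rotMap_apply,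
      Prod.fst_add]
    constructor
    · rintro ⟨⟨h1, h2⟩, h3⟩; exact ⟨h1, h2, by linarith⟩
    · rintro ⟨h1, h2, h3⟩; exact ⟨⟨h1, h2⟩, by linarith⟩
  -- compute volume K via slicing in the second coordinate
  have hslice : ∀ y : ℝ, ((fun x => (x, y)) ⁻¹' K) =
      if |y| ≤ 1/2 then Set.Icc (-(1/2)) ((y * s - r) / c) else ∅ := by
    intro y
    by_cases hy : |y| ≤ 1/2
    · rw [if_pos hy]
      ext x
      simp only [Set.mem_preimage, hK, Set.mem_setOf_eq, Set.mem_Icc, abs_le]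
      have hy2 : y ≤ 1/2 := (abs_le.1 hy).2
      have htle : (y * s - r) / c ≤ 1/2 := by
        rw [div_le_iff₀ hc0]; nlinarith
      constructor
      · rintro ⟨⟨h1, h2⟩, _, h3⟩
        refine ⟨h1, ?_⟩
        rw [le_div_iff₀ hc0]; linarith
      · rintro ⟨h1, h2⟩
        have hx2 : x ≤ 1/2 := le_trans h2 htle
        refine ⟨⟨h1, hx2⟩, abs_le.1 hy, ?_⟩
        rw [le_div_iff₀ hc0] at h2; linarith
    · rw [if_neg hy]
      ext x
      simp only [Set.mem_preimage, hK, Set.mem_setOf_eq, Set.mem_empty_iff_false, iff_false]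
      rintro ⟨_, h2, _⟩
      exact hy h2
  have hvolK : volume K = ENNReal.ofReal (1/2 - r / c) := by
    rw [Measure.volume_eq_prod ℝ ℝ]
    rw [Measure.prod_apply_symm hKmeas]
    have hfun : ∀ y : ℝ, volume ((fun x => (x, y)) ⁻¹' K) =
        Set.indicator (Set.Icc (-(1/2) : ℝ) (1/2))
          (fun y => ENNReal.ofReal ((y * s - r) / c + 1/2)) y := by
      intro y
      rw [hslice y]
      by_cases hy : |y| ≤ 1/2
      · rw [if_pos hy, Set.indicator_of_mem (by simpa [Set.mem_Icc, abs_le] using hy),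
          Real.volume_Icc]
        congr 1; ring
      · rw [if_neg hy, Set.indicator_of_notMem (by simpa [Set.mem_Icc, abs_le] using hy)]
        simp
    simp only [hfun]
    rw [lintegral_indicator measurableSet_Icc]
    have hcont : Continuous (fun y : ℝ => (y * s - r) / c + 1/2) := by fun_prop
    have hint : IntegrableOn (fun y : ℝ => (y * s - r) / c + 1/2)
        (Set.Icc (-(1/2) : ℝ) (1/2)) volume :=
      hcont.continuousOn.integrableOn_Icc
    have hnn : 0 ≤ᵐ[volume.restrict (Set.Icc (-(1/2) : ℝ) (1/2))]
        (fun y : ℝ => (y * s - r) / c + 1/2) := by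
      refine (ae_restrict_iff' measurableSet_Icc).2 (ae_of_all _ ?_)
      rintro y ⟨hy1, hy2⟩
      have h : -(1/2 : ℝ) ≤ (y * s - r) / c := by
        rw [le_div_iff₀ hc0]; nlinarith
      simp only [Pi.zero_apply]
      linarith
    rw [← ofReal_integral_eq_lintegral_ofReal hint hnn]
    congr 1
    rw [MeasureTheory.integral_Icc_eq_integral_Ioc,
      ← intervalIntegral.integral_of_le (by norm_num : (-(1/2) : ℝ) ≤ 1/2)]
    have heq : ∀ y : ℝ, (y * s - r) / c + 1/2 = (s / c) * y + (1/2 - r / c) := by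
      intro y; field_simp; ring
    simp only [heq]
    rw [intervalIntegral.integral_add
        ((by fun_prop : Continuous fun y : ℝ => s / c * y).intervalIntegrable _ _)
        (intervalIntegrable_const),
      intervalIntegral.integral_const_mul, integral_id, intervalIntegral.integral_const]
    norm_num
  -- put everything together
  have hfinal : Ainf r θ = 1/2 - r / c := by
    rw [Ainf, hvol, hvolK, ENNReal.toReal_ofReal]
    have : r / c < 1/2 := by
      rw [div_lt_iff₀ hc0]; nlinarith
    linarith
  rw [hfinal, Real.tan_eq_sin_div_cos, add_comm (π/4) θ, hkey, ← hc, ← hs]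
  field_simp
  ring
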